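/- Antisymmetric state counterexample: let H = E_{i≠j} F_{i,j} be the average of swap operators over all ordered pairs of distinct indices among n systems, each of dimension d = n. Then the antisymmetric state ψ = (1/n!) Σ_{π∈S_n} sgn(π) |π(1)⟩⊗...⊗|π(n)⟩ satisfies ⟨ψ|H|ψ⟩ = −1, while every product state φ = φ_1 ⊗ ... ⊗ φ_n satisfies tr(Hφ) ≥ 0. -/

import Mathlib

open Finset
open scoped Classical BigOperators ComplexOrder

/-- Trace norm of a complex matrix: the trace of the positive square root of AᴴA. -/
noncomputable def traceNorm {n : Type*} [Fintype n] [DecidableEq n]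
    (A : Matrix n n ℂ) : ℝ :=
  (((Matrix.posSemidef_conjTranspose_mul_self A).1.eigenvectorUnitary.1 *
      Matrix.diagonal (((↑) : ℝ → ℂ) ∘ Real.sqrt ∘ (Matrix.posSemidef_conjTranspose_mul_self A).1.eigenvalues) *
      (star (Matrix.posSemidef_conjTranspose_mul_self A).1.eigenvectorUnitary : Matrix n n ℂ)).trace).re

/-- Tensor (Kronecker) product of k matrices of size d, acting on (C^d)^{⊗k},
whose index set is Fin k → Fin d. -/
noncomputable def piKron {k d : ℕ} (M : Fin k → Matrix (Fin d) (Fin d) ℂ) :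
    Matrix (Fin k → Fin d) (Fin k → Fin d) ℂ :=
  Matrix.of fun f g => ∏ i, M i (f i) (g i)

/-- The rank-one projector |v⟩⟨v| associated to a vector v in C^d. -/
noncomputable def vecProj {d : ℕ} (v : Fin d → ℂ) : Matrix (Fin d) (Fin d) ℂ :=
  Matrix.of fun i j => v i * star (v j)

/-- Von Neumann entropy (in nats) of a Hermitian matrix, via its eigenvalues. -/
noncomputable def vN {n : Type*} [Fintype n] [DecidableEq n] (A : Matrix n n ℂ) : ℝ :=
  if h : A.IsHermitian then -∑ i, h.eigenvalues i * Real.log (h.eigenvalues i) else 0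

/-- The swap operator F_{i,j} on (C^n)^{⊗n}, exchanging tensor factors i and j. -/
noncomputable def swapMat (n : ℕ) (i j : Fin n) :
    Matrix (Fin n → Fin n) (Fin n → Fin n) ℂ :=
  Matrix.of fun f g => if ∀ q, g q = f (Equiv.swap i j q) then 1 else 0

/-- The Hamiltonian H = E_{i≠j} F_{i,j}: the average of the swap operators over all
ordered pairs of distinct indices. -/
noncomputable def swapHam (n : ℕ) : Matrix (Fin n → Fin n) (Fin n → Fin n) ℂ :=
  ((n * (n - 1) : ℕ) : ℂ)⁻¹ •
    ∑ i : Fin n, ∑ j ∈ Finset.univ.filter (fun j => j ≠ i), swapMat n i j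

/-- The amplitudes of the antisymmetric state ψ = (1/√(n!)) Σ_π sgn(π) |π(1),...,π(n)⟩. -/
noncomputable def antisymVec (n : ℕ) : (Fin n → Fin n) → ℂ :=
  fun f =>
    if h : Function.Bijective f then
      (((Equiv.Perm.sign (Equiv.ofBijective f h) : ℤ) : ℂ) / ((Real.sqrt n.factorial : ℝ) : ℂ))
    else 0

/- ---------- auxiliary lemmas ---------- -/

lemma antisymVec_comp_swap {n : ℕ} {i j : Fin n} (hij : i ≠ j) (f : Fin n → Fin n) :
    antisymVec n (f ∘ Equiv.swap i j) = - antisymVec n f := by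
  by_cases hf : Function.Bijective f
  · have hb : Function.Bijective (f ∘ (Equiv.swap i j : Equiv.Perm (Fin n))) :=
      hf.comp (Equiv.swap i j).bijective
    simp only [antisymVec, dif_pos hb, dif_pos hf]
    have he : Equiv.ofBijective _ hb
        = (Equiv.swap i j).trans (Equiv.ofBijective f hf) := Equiv.ext fun q => rfl
    rw [he, Equiv.Perm.sign_trans, Equiv.Perm.sign_swap hij]
    rw [Units.val_mul, Units.val_neg, Units.val_one]
    push_cast
    ring
  · have hb : ¬ Function.Bijective (f ∘ (Equiv.swap i j : Equiv.Perm (Fin n))) := by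
      intro h
      have h2 := h.comp (Equiv.swap i j).bijective
      have h3 : (f ∘ (Equiv.swap i j : Equiv.Perm (Fin n)))
          ∘ (Equiv.swap i j : Equiv.Perm (Fin n)) = f := by
        funext q; simp
      rw [h3] at h2
      exact hf h2
    simp only [antisymVec]
    rw [dif_neg hb, dif_neg hf, neg_zero]

lemma antisymVec_norm (n : ℕ) :
    ∑ f : Fin n → Fin n, (starRingEnd ℂ) (antisymVec n f) * antisymVec n f = 1 := by
  have hterm : ∀ f : Fin n → Fin n,
      (starRingEnd ℂ) (antisymVec n f) * antisymVec n f
        = if Function.Bijective f then ((n.factorial : ℂ))⁻¹ else 0 := by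
    intro f
    by_cases hf : Function.Bijective f
    · simp only [antisymVec, dif_pos hf, if_pos hf]
      set s : ℤ := (Equiv.Perm.sign (Equiv.ofBijective f hf) : ℤ) with hs
      have hs2 : (s : ℂ) * s = 1 := by
        have hu : s = 1 ∨ s = -1 := Int.isUnit_iff.mp (Units.isUnit _)
        rcases hu with h | h <;> rw [h] <;> norm_num
      have hr : ((Real.sqrt n.factorial : ℝ) : ℂ) * ((Real.sqrt n.factorial : ℝ) : ℂ)
          = (n.factorial : ℂ) := by
        rw [← Complex.ofReal_mul, Real.mul_self_sqrt (by positivity)]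
        norm_cast
      rw [map_div₀, Complex.conj_ofReal, map_intCast, div_mul_div_comm, hs2, hr, one_div]
    · simp only [antisymVec]
      rw [dif_neg hf, if_neg hf, mul_zero]
  simp_rw [hterm]
  rw [← Finset.sum_filter, Finset.sum_const]
  have hcard : (Finset.univ.filter fun f : Fin n → Fin n => Function.Bijective f).card
      = n.factorial := by
    rw [← Fintype.card_subtype]
    have e : {f : Fin n → Fin n // Function.Bijective f} ≃ Equiv.Perm (Fin n) :=
      { toFun := fun f => Equiv.ofBijective f.1 f.2
        invFun := fun π => ⟨π, π.bijective⟩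
        left_inv := fun f => Subtype.ext rfl
        right_inv := fun π => Equiv.ext fun _ => rfl }
    rw [Fintype.card_congr e, Fintype.card_perm, Fintype.card_fin]
  rw [hcard, nsmul_eq_mul]
  exact mul_inv_cancel₀ (Nat.cast_ne_zero.mpr n.factorial_ne_zero)

lemma psd_trace_nonneg {m : Type*} [Fintype m] {M : Matrix m m ℂ}
    (hM : M.PosSemidef) : 0 ≤ M.trace := by
  rw [Matrix.trace]
  refine Finset.sum_nonneg fun i _ => ?_
  exact hM.diag_nonneg

open scoped MatrixOrder in
lemma psd_trace_mul_nonneg {m : Type*} [Fintype m] [DecidableEq m] {A B : Matrix m m ℂ}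
    (hA : A.PosSemidef) (hB : B.PosSemidef) : 0 ≤ (A * B).trace := by
  obtain ⟨S, rfl⟩ := CStarAlgebra.nonneg_iff_eq_star_mul_self.mp hA.nonneg
  rw [Matrix.mul_assoc, Matrix.trace_mul_comm]
  have h := hB.mul_mul_conjTranspose_same S
  exact psd_trace_nonneg h

lemma swapHam_row {n : ℕ} (f : Fin n → Fin n) (v : (Fin n → Fin n) → ℂ) :
    ∑ g : Fin n → Fin n, swapHam n f g * v g
      = ((n * (n - 1) : ℕ) : ℂ)⁻¹ *
          ∑ i : Fin n, ∑ j ∈ Finset.univ.filter (fun j => j ≠ i),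
            v (f ∘ Equiv.swap i j) := by
  have h1 : ∀ g, swapHam n f g * v g
      = ((n * (n - 1) : ℕ) : ℂ)⁻¹ * ∑ i : Fin n, ∑ j ∈ Finset.univ.filter (fun j => j ≠ i),
          swapMat n i j f g * v g := by
    intro g
    simp only [swapHam, Matrix.smul_apply, Matrix.sum_apply, smul_eq_mul, Finset.sum_mul,
      mul_assoc]
  simp_rw [h1]
  rw [← Finset.mul_sum]
  congr 1
  rw [Finset.sum_comm]
  refine Finset.sum_congr rfl fun i _ => ?_
  rw [Finset.sum_comm]
  refine Finset.sum_congr rfl fun j _ => ?_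
  rw [Finset.sum_eq_single (f ∘ Equiv.swap i j)]
  · simp [swapMat, Function.comp]
  · intro g _ hg
    have h : ¬ ∀ q, g q = f (Equiv.swap i j q) := fun h => hg (funext h)
    simp [swapMat, h]
  · simp

lemma sum_piKron_swap {n : ℕ} {i j : Fin n} (hij : i ≠ j) (φ : Fin n → Matrix (Fin n) (Fin n) ℂ)
    (hTr : ∀ k, (φ k).trace = 1) :
    ∑ f : Fin n → Fin n, piKron φ (f ∘ Equiv.swap i j) f = (φ j * φ i).trace := by
  have hji : j ≠ i := hij.symm
  let e : ((Fin n × Fin n) × ({k : Fin n // k ≠ i ∧ k ≠ j} → Fin n)) ≃ (Fin n → Fin n) :=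
    { toFun := fun x k => if h1 : k = i then x.1.1 else if h2 : k = j then x.1.2
        else x.2 ⟨k, h1, h2⟩
      invFun := fun f => ((f i, f j), fun k => f k.1)
      left_inv := by
        rintro ⟨⟨a, b⟩, g⟩
        refine Prod.ext (Prod.ext ?_ ?_) ?_
        · simp
        · simp [hji]
        · funext k
          obtain ⟨k, h1, h2⟩ := k
          simp [h1, h2]
      right_inv := by
        intro f
        funext k
        by_cases h1 : k = i
        · subst h1; simp
        · by_cases h2 : k = j
          · subst h2; simp [h1]
          · simp [h1, h2] }
  have hei : ∀ a b g, e ((a, b), g) i = a := by intro a b g; simp [e]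
  have hej : ∀ a b g, e ((a, b), g) j = b := by intro a b g; simp [e, hji]
  have hek : ∀ a b g k (h1 : k ≠ i) (h2 : k ≠ j), e ((a, b), g) k = g ⟨k, h1, h2⟩ := by
    intro a b g k h1 h2; simp [e, h1, h2]
  rw [← Equiv.sum_comp e]
  have key : ∀ x : (Fin n × Fin n) × ({k : Fin n // k ≠ i ∧ k ≠ j} → Fin n),
      piKron φ (e x ∘ Equiv.swap i j) (e x)
        = φ i x.1.2 x.1.1 * φ j x.1.1 x.1.2 *
            ∏ k : {k : Fin n // k ≠ i ∧ k ≠ j}, φ k.1 (x.2 k) (x.2 k) := by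
    rintro ⟨⟨a, b⟩, g⟩
    show (∏ k, φ k (e ((a, b), g) (Equiv.swap i j k)) (e ((a, b), g) k)) = _
    rw [← Finset.mul_prod_erase Finset.univ _ (Finset.mem_univ i),
        ← Finset.mul_prod_erase _ _ (Finset.mem_erase.mpr ⟨hji, Finset.mem_univ j⟩)]
    rw [Equiv.swap_apply_left, Equiv.swap_apply_right, hei, hej]
    rw [Finset.prod_subtype (p := fun k => k ≠ i ∧ k ≠ j) ((Finset.univ.erase i).erase j)
        (by intro k; simp [Finset.mem_erase, and_comm])
        (fun k => φ k (e ((a, b), g) (Equiv.swap i j k)) (e ((a, b), g) k))]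
    rw [mul_assoc]
    congr 1
    congr 1
    refine Finset.prod_congr rfl fun k _ => ?_
    rw [Equiv.swap_apply_of_ne_of_ne k.2.1 k.2.2, hek a b g k.1 k.2.1 k.2.2]
  calc ∑ x, piKron φ (e x ∘ Equiv.swap i j) (e x)
      = ∑ x : (Fin n × Fin n) × ({k : Fin n // k ≠ i ∧ k ≠ j} → Fin n),
          φ i x.1.2 x.1.1 * φ j x.1.1 x.1.2 *
            ∏ k : {k : Fin n // k ≠ i ∧ k ≠ j}, φ k.1 (x.2 k) (x.2 k) :=
        Finset.sum_congr rfl fun x _ => key x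
    _ = ∑ p : Fin n × Fin n, φ i p.2 p.1 * φ j p.1 p.2 *
          ∑ g : ({k : Fin n // k ≠ i ∧ k ≠ j} → Fin n),
            ∏ k : {k : Fin n // k ≠ i ∧ k ≠ j}, φ k.1 (g k) (g k) := by
        rw [Fintype.sum_prod_type]
        exact Finset.sum_congr rfl fun p _ => by simp only [Finset.mul_sum]
    _ = (φ j * φ i).trace := by
        have hps := Finset.prod_univ_sum
          (fun _ : {k : Fin n // k ≠ i ∧ k ≠ j} => (Finset.univ : Finset (Fin n)))
          (fun k c => φ k.1 c c)
        have hsum : ∑ g : ({k : Fin n // k ≠ i ∧ k ≠ j} → Fin n),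
            ∏ k : {k : Fin n // k ≠ i ∧ k ≠ j}, φ k.1 (g k) (g k) = 1 := by
          rw [← Fintype.piFinset_univ, ← hps]
          have h1 : ∀ k : {k : Fin n // k ≠ i ∧ k ≠ j}, ∑ c : Fin n, φ k.1 c c = 1 := by
            intro k
            rw [← hTr k.1]
            simp [Matrix.trace, Matrix.diag]
          simp [h1]
        simp_rw [hsum, mul_one]
        rw [Fintype.sum_prod_type]
        rw [Matrix.trace]
        simp only [Matrix.diag, Matrix.mul_apply]
        exact Finset.sum_congr rfl fun a _ => Finset.sum_congr rfl fun b _ => mul_comm _ _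

/-- Antisymmetric counterexample: for n systems of dimension d = n, the antisymmetric
state has energy ⟨ψ|H|ψ⟩ = −1 for H = E_{i≠j} F_{i,j}, while every product state
φ_1 ⊗ ... ⊗ φ_n has nonnegative energy. -/
theorem antisymmetric_counterexample (n : ℕ) (hn : 2 ≤ n) :
    (∑ f : Fin n → Fin n, ∑ g : Fin n → Fin n,
        (starRingEnd ℂ) (antisymVec n f) * swapHam n f g * antisymVec n g) = -1 ∧
    ∀ φ : Fin n → Matrix (Fin n) (Fin n) ℂ,
      (∀ i, (φ i).PosSemidef) → (∀ i, (φ i).trace = 1) →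
      0 ≤ ((swapHam n * piKron φ).trace).re := by
  have hc : ((n * (n - 1) : ℕ) : ℂ) ≠ 0 := by
    have h1 : 0 < n * (n - 1) := Nat.mul_pos (by omega) (by omega)
    exact_mod_cast Nat.cast_ne_zero.mpr h1.ne'
  have hcardf : ∀ i : Fin n, (Finset.univ.filter (fun j => j ≠ i)).card = n - 1 := by
    intro i
    rw [Finset.filter_ne', Finset.card_erase_of_mem (Finset.mem_univ i),
      Finset.card_univ, Fintype.card_fin]
  constructor
  · -- part 1
    have hrow : ∀ f : Fin n → Fin n,
        ∑ g : Fin n → Fin n, swapHam n f g * antisymVec n g = - antisymVec n f := by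
      intro f
      rw [swapHam_row]
      have h2 : ∀ i : Fin n,
          ∑ j ∈ Finset.univ.filter (fun j => j ≠ i), antisymVec n (f ∘ Equiv.swap i j)
            = ∑ j ∈ Finset.univ.filter (fun j => j ≠ i), (- antisymVec n f) :=
        fun i => Finset.sum_congr rfl fun j hj =>
          antisymVec_comp_swap (Ne.symm (Finset.mem_filter.mp hj).2) f
      simp_rw [h2, Finset.sum_const, hcardf, Finset.sum_const, Finset.card_univ,
        Fintype.card_fin, smul_smul, nsmul_eq_mul]
      rw [← mul_assoc, inv_mul_cancel₀ hc, one_mul]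
    calc ∑ f : Fin n → Fin n, ∑ g : Fin n → Fin n,
          (starRingEnd ℂ) (antisymVec n f) * swapHam n f g * antisymVec n g
        = ∑ f : Fin n → Fin n, (starRingEnd ℂ) (antisymVec n f) *
            ∑ g : Fin n → Fin n, swapHam n f g * antisymVec n g := by
          refine Finset.sum_congr rfl fun f _ => ?_
          rw [Finset.mul_sum]
          exact Finset.sum_congr rfl fun g _ => mul_assoc _ _ _
      _ = - ∑ f : Fin n → Fin n, (starRingEnd ℂ) (antisymVec n f) * antisymVec n f := by
          simp_rw [hrow, mul_neg]
          rw [Finset.sum_neg_distrib]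
      _ = -1 := by rw [antisymVec_norm]
  · -- part 2
    intro φ hpsd htr
    have hexp : (swapHam n * piKron φ).trace
        = ((n * (n - 1) : ℕ) : ℂ)⁻¹ *
            ∑ i : Fin n, ∑ j ∈ Finset.univ.filter (fun j => j ≠ i), (φ j * φ i).trace := by
      calc (swapHam n * piKron φ).trace
          = ∑ f : Fin n → Fin n, ∑ g : Fin n → Fin n,
              swapHam n f g * piKron φ g f := by
            simp [Matrix.trace, Matrix.diag, Matrix.mul_apply]
        _ = ∑ f : Fin n → Fin n, ((n * (n - 1) : ℕ) : ℂ)⁻¹ *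
              ∑ i : Fin n, ∑ j ∈ Finset.univ.filter (fun j => j ≠ i),
                piKron φ (f ∘ Equiv.swap i j) f :=
            Finset.sum_congr rfl fun f _ => swapHam_row f _
        _ = ((n * (n - 1) : ℕ) : ℂ)⁻¹ * ∑ i : Fin n,
              ∑ j ∈ Finset.univ.filter (fun j => j ≠ i),
                ∑ f : Fin n → Fin n, piKron φ (f ∘ Equiv.swap i j) f := by
            rw [← Finset.mul_sum]
            congr 1
            rw [Finset.sum_comm]
            exact Finset.sum_congr rfl fun i _ => Finset.sum_comm
        _ = ((n * (n - 1) : ℕ) : ℂ)⁻¹ *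
              ∑ i : Fin n, ∑ j ∈ Finset.univ.filter (fun j => j ≠ i), (φ j * φ i).trace := by
            congr 1
            refine Finset.sum_congr rfl fun i _ => Finset.sum_congr rfl fun j hj => ?_
            exact sum_piKron_swap (Ne.symm (Finset.mem_filter.mp hj).2) φ htr
    have hS : (0:ℂ) ≤ ∑ i : Fin n, ∑ j ∈ Finset.univ.filter (fun j => j ≠ i),
        (φ j * φ i).trace :=
      Finset.sum_nonneg fun i _ => Finset.sum_nonneg fun j _ =>
        psd_trace_mul_nonneg (hpsd j) (hpsd i)
    rw [hexp]
    have hcast : ((n * (n - 1) : ℕ) : ℂ)⁻¹ = Complex.ofReal (((n * (n - 1) : ℕ) : ℝ)⁻¹) := by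
      push_cast
      ring
    rw [hcast, Complex.re_ofReal_mul]
    refine mul_nonneg (by positivity) ?_
    have := (Complex.le_def.mp hS).1
    simpa using this
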